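/- arXiv:2503.10381 — 3 statements merged into one kernel-verified Lean document; each statement's English description precedes it below -/
import Mathlib

section
/- Let q_n denote continuants. For all positive integers a_1,…,a_{n+k}: 1 ≤ q_{n+k}(a_1,…,a_{n+k}) / (q_n(a_1,…,a_n) · q_k(a_{n+1},…,a_{n+k})) ≤ 2. -/
noncomputable def gaussMap (x : ℝ) : ℝ := if x = 0 then 0 else 1/x - ⌊1/x⌋

noncomputable def cfA (n : ℕ) (x : ℝ) : ℕ := ⌊1 / (gaussMap^[n] x)⌋₊

def K : List ℕ → ℕ
  | [] => 1
  | [a] => a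
  | a :: b :: l => a * K (b :: l) + K l

def cylinder (l : List ℕ) : Set ℝ :=
  {x | x ∈ Set.Ico (0:ℝ) 1 ∧ ∀ i, i < l.length → cfA i x = l.getD i 0}

noncomputable def hContent (t : ℝ) (A : Set ℝ) : ENNReal :=
  ⨅ (c : ℕ → Set ℝ) (_ : A ⊆ ⋃ i, c i) (_ : ∀ i, ∃ x r, c i = Metric.ball x r),
    ∑' i, EMetric.diam (c i) ^ t

def D : List ℕ → ℕ
  | [] => 0
  | a :: l => K ((a :: l).dropLast)

lemma K_pos (l : List ℕ) (h : ∀ a ∈ l, 0 < a) : 1 ≤ K l := by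
  induction l using K.induct with
  | case1 => simp [K]
  | case2 a => simpa [K] using Nat.one_le_iff_ne_zero.mpr (h a (by simp)).ne'
  | case3 a b l ih1 ih2 =>
    have ha : 1 ≤ a := h a (by simp)
    have := ih1 (fun x hx => h x (by simp [hx]))
    have : 1 ≤ a * K (b :: l) := Nat.one_le_iff_ne_zero.mpr (by positivity)
    simp [K]; omega

lemma K_tail_le (l : List ℕ) (h : ∀ a ∈ l, 0 < a) : K l.tail ≤ K l := by
  match l with
  | [] => simp
  | [a] => simpa [K] using Nat.one_le_iff_ne_zero.mpr (h a (by simp)).ne'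
  | a :: b :: l =>
    have ha : 1 ≤ a := h a (by simp)
    have hb : 1 ≤ K (b :: l) := K_pos _ (fun x hx => h x (by simp [hx]))
    have : K (b :: l) ≤ a * K (b :: l) := Nat.le_mul_of_pos_left _ ha
    simp only [List.tail_cons, K]
    omega

lemma D_le_K (l : List ℕ) (h : ∀ a ∈ l, 0 < a) : D l ≤ K l := by
  induction l using K.induct with
  | case1 => simp [D, K]
  | case2 a => simpa [D, K] using Nat.one_le_iff_ne_zero.mpr (h a (by simp)).ne'
  | case3 a b l ih1 ih2 =>
    match l with
    | [] =>
      have hb : 1 ≤ b := h b (by simp)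
      simp [D, K]
      nlinarith
    | c :: l' =>
      have ih1' := ih1 (fun x hx => h x (by simp [hx]))
      have ih2' := ih2 (fun x hx => h x (by simp [hx]))
      have h1 : D (a :: b :: c :: l') = a * D (b :: c :: l') + D (c :: l') := by
        simp only [D, List.dropLast]
        cases h' : (c :: l').dropLast with
        | nil => simp [K]
        | cons x s => simp [K]
      rw [h1]
      have : a * D (b :: c :: l') ≤ a * K (b :: c :: l') :=
        Nat.mul_le_mul_left a ih1'
      simp only [K] at *
      omega

lemma K_append_eq (l₁ l₂ : List ℕ) (h : l₂ ≠ []) :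
    K (l₁ ++ l₂) = K l₁ * K l₂ + D l₁ * K l₂.tail := by
  induction l₁ using K.induct with
  | case1 => simp [D, K]
  | case2 a =>
    obtain ⟨b, l, rfl⟩ : ∃ b l, l₂ = b :: l := by
      cases l₂ with
      | nil => exact absurd rfl h
      | cons b l => exact ⟨b, l, rfl⟩
    simp [K, D]
  | case3 a b l ih1 ih2 =>
    have h1 : D (a :: b :: l) = a * D (b :: l) + D l := by
      match l with
      | [] => simp [D, K]
      | c :: l' =>
        simp only [D, List.dropLast]
        cases h' : (c :: l').dropLast with
        | nil => simp [K]
        | cons x s => simp [K]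
    have key : K (a :: b :: l ++ l₂) = a * K (b :: (l ++ l₂)) + K (l ++ l₂) := rfl
    simp only [List.cons_append] at ih1
    rw [key, ih1, ih2, h1]
    simp only [K]
    ring

theorem continuant_quasi_mul (l₁ l₂ : List ℕ) (h₁ : ∀ a ∈ l₁, 0 < a)
    (h₂ : ∀ a ∈ l₂, 0 < a) :
    1 ≤ (K (l₁ ++ l₂) : ℝ) / ((K l₁ : ℝ) * (K l₂ : ℝ)) ∧
    (K (l₁ ++ l₂) : ℝ) / ((K l₁ : ℝ) * (K l₂ : ℝ)) ≤ 2 := by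
  have hK1 : (1:ℝ) ≤ K l₁ := by exact_mod_cast K_pos l₁ h₁
  have hK2 : (1:ℝ) ≤ K l₂ := by exact_mod_cast K_pos l₂ h₂
  have hpos : (0:ℝ) < (K l₁ : ℝ) * K l₂ := by nlinarith
  rcases eq_or_ne l₂ [] with rfl | h
  · have hne : (K l₁ : ℝ) ≠ 0 := by linarith
    simp only [List.append_nil, K, Nat.cast_one, mul_one, div_self hne]
    norm_num
  · have hid := K_append_eq l₁ l₂ h
    have hD : (D l₁ : ℝ) ≤ K l₁ := by exact_mod_cast D_le_K l₁ h₁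
    have hT : (K l₂.tail : ℝ) ≤ K l₂ := by
      exact_mod_cast K_tail_le l₂ h₂
    have hDnn : (0:ℝ) ≤ D l₁ := Nat.cast_nonneg _
    have hTnn : (0:ℝ) ≤ K l₂.tail := Nat.cast_nonneg _
    have hidR : (K (l₁ ++ l₂) : ℝ) = K l₁ * K l₂ + D l₁ * K l₂.tail := by
      exact_mod_cast hid
    constructor
    · rw [le_div_iff₀ hpos]; nlinarith
    · rw [div_le_iff₀ hpos]; nlinarith
end

section
/- Fix n ≥ 1 and define f(s) = Σ_{a_1,…,a_n ∈ ℕ⁺} q_n(a_1,…,a_n)^{−2s} for s > 1/2. Then f is continuous on (1/2, ∞) and f(s) → ∞ as s ↓ 1/2. -/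
lemma K_cons_le (b : ℕ) (l : List ℕ) (hb : 1 ≤ b) : K l ≤ K (b :: l) := by
  cases l with
  | nil => simpa [K] using hb
  | cons c m =>
    show K (c :: m) ≤ b * K (c :: m) + K m
    calc K (c :: m) = 1 * K (c :: m) := (one_mul _).symm
    _ ≤ b * K (c :: m) := Nat.mul_le_mul_right _ hb
    _ ≤ b * K (c :: m) + K m := Nat.le_add_right _ _

lemma K_bounds : ∀ l : List ℕ, (∀ a ∈ l, 1 ≤ a) →
    l.prod ≤ K l ∧ K l ≤ 2 ^ l.length * l.prod
  | [] => fun _ => by simp [K]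
  | [a] => fun h => by
    have : 1 ≤ a := h a (by simp)
    simp [K]; omega
  | a :: b :: l => fun h => by
    have ha : 1 ≤ a := h a (by simp)
    have hb : 1 ≤ b := h b (by simp)
    obtain ⟨ih1, ih2⟩ := K_bounds (b :: l) (fun x hx => h x (by simp [hx]))
    constructor
    · show (a :: b :: l).prod ≤ a * K (b :: l) + K l
      rw [List.prod_cons]
      calc a * (b :: l).prod ≤ a * K (b :: l) := Nat.mul_le_mul_left _ ih1
      _ ≤ a * K (b :: l) + K l := Nat.le_add_right _ _
    · show a * K (b :: l) + K l ≤ 2 ^ (a :: b :: l).length * (a :: b :: l).prod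
      have h1 : K l ≤ K (b :: l) := K_cons_le b l hb
      have h2 : a * K (b :: l) + K l ≤ 2 * a * K (b :: l) := by nlinarith
      calc a * K (b :: l) + K l ≤ 2 * a * K (b :: l) := h2
      _ ≤ 2 * a * (2 ^ (b :: l).length * (b :: l).prod) := Nat.mul_le_mul_left _ ih2
      _ = 2 ^ (a :: b :: l).length * (a :: b :: l).prod := by
          simp [List.prod_cons, pow_succ]; ring

lemma summable_pnat_rpow {t : ℝ} (ht : 1 < t) :
    Summable fun m : ℕ+ => ((m : ℕ) : ℝ) ^ (-t) := by
  have h := Real.summable_nat_rpow (p := -t) |>.2 (by linarith)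
  exact h.comp_injective PNat.coe_injective

lemma summable_pi_prod {t : ℝ} (ht : 1 < t) (n : ℕ) :
    Summable fun a : Fin n → ℕ+ => ∏ i, ((a i : ℕ) : ℝ) ^ (-t) := by
  induction n with
  | zero => exact Summable.of_finite
  | succ m ih =>
    rw [← (Fin.consEquiv (fun _ => ℕ+)).summable_iff]
    have h := (summable_pnat_rpow ht).mul_of_nonneg ih
      (fun x => Real.rpow_nonneg (by positivity) _)
      (fun a => Finset.prod_nonneg fun i _ => Real.rpow_nonneg (by positivity) _)
    refine h.congr fun x => ?_
    simp only [Function.comp, Fin.consEquiv_apply, Fin.prod_univ_succ, Fin.cons_zero,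
      Fin.cons_succ]

section main

variable (n : ℕ)

noncomputable def Pfun (a : Fin n → ℕ+) : ℝ := (K (List.ofFn fun i => (a i : ℕ)) : ℝ)

lemma Pfun_bounds (a : Fin n → ℕ+) :
    (∏ i, ((a i : ℕ) : ℝ)) ≤ Pfun n a ∧ Pfun n a ≤ ∏ i, (2 * ((a i : ℕ) : ℝ)) := by
  have hmem : ∀ x ∈ List.ofFn fun i => ((a i : ℕ)), 1 ≤ x := by
    intro x hx
    rw [List.mem_ofFn] at hx
    obtain ⟨i, rfl⟩ := hx
    exact (a i).one_le
  obtain ⟨h1, h2⟩ := K_bounds _ hmem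
  have hprod : (List.ofFn fun i => ((a i : ℕ))).prod = ∏ i, ((a i : ℕ)) := List.prod_ofFn
  have hlen : (List.ofFn fun i => ((a i : ℕ))).length = n := List.length_ofFn
  constructor
  · have := h1
    rw [hprod] at this
    calc (∏ i, ((a i : ℕ) : ℝ)) = ((∏ i, (a i : ℕ) : ℕ) : ℝ) := by push_cast; rfl
    _ ≤ Pfun n a := Nat.cast_le.2 this
  · have := h2
    rw [hprod, hlen] at this
    calc Pfun n a ≤ ((2 ^ n * ∏ i, (a i : ℕ) : ℕ) : ℝ) := Nat.cast_le.2 this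
    _ = ∏ i, (2 * ((a i : ℕ) : ℝ)) := by
        push_cast
        rw [Finset.prod_mul_distrib, Finset.prod_const, Finset.card_univ, Fintype.card_fin]

lemma Pfun_prod_pos (a : Fin n → ℕ+) : (0:ℝ) < ∏ i, ((a i : ℕ) : ℝ) :=
  Finset.prod_pos fun i _ => by exact_mod_cast (a i).pos

lemma one_le_Pfun (a : Fin n → ℕ+) : (1:ℝ) ≤ Pfun n a := by
  refine le_trans ?_ (Pfun_bounds n a).1
  have h : ∀ i ∈ (Finset.univ : Finset (Fin n)), (1:ℝ) ≤ ((a i : ℕ) : ℝ) :=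
    fun i _ => by exact_mod_cast (a i).one_le
  calc (1:ℝ) = ∏ _i : Fin n, (1:ℝ) := by simp
  _ ≤ ∏ i, ((a i : ℕ) : ℝ) := Finset.prod_le_prod (by simp) h

lemma summable_Pfun {t : ℝ} (ht : 1 < t) :
    Summable fun a : Fin n → ℕ+ => Pfun n a ^ (-t) := by
  refine (summable_pi_prod ht n).of_nonneg_of_le
    (fun a => Real.rpow_nonneg (le_trans zero_le_one (one_le_Pfun n a)) _) (fun a => ?_)
  have h1 := (Pfun_bounds n a).1
  have h2 := Pfun_prod_pos n a
  calc Pfun n a ^ (-t) ≤ (∏ i, ((a i : ℕ) : ℝ)) ^ (-t) :=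
        Real.rpow_le_rpow_of_nonpos h2 h1 (by linarith)
  _ = ∏ i, ((a i : ℕ) : ℝ) ^ (-t) :=
        (Real.finset_prod_rpow _ _ (fun i _ => by positivity) _).symm

lemma not_summable_inv_Pfun (hn : 1 ≤ n) :
    ¬ Summable fun a : Fin n → ℕ+ => (Pfun n a)⁻¹ := by
  intro hS
  -- compare with (∏ 2 a_i)⁻¹
  have h2 : Summable fun a : Fin n → ℕ+ => (∏ i, (2 * ((a i : ℕ) : ℝ)))⁻¹ := by
    refine hS.of_nonneg_of_le (fun a => by positivity) (fun a => ?_)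
    have := (Pfun_bounds n a).2
    have hp : (0:ℝ) < Pfun n a := lt_of_lt_of_le one_pos (one_le_Pfun n a)
    exact inv_anti₀ hp this
  have h3 : Summable fun a : Fin n → ℕ+ => ∏ i, ((a i : ℕ) : ℝ)⁻¹ := by
    have : ∀ a : Fin n → ℕ+, (∏ i, (2 * ((a i : ℕ) : ℝ)))⁻¹
        = ((2:ℝ)^n)⁻¹ * ∏ i, ((a i : ℕ) : ℝ)⁻¹ := by
      intro a
      rw [Finset.prod_mul_distrib, Finset.prod_const, Finset.card_univ, Fintype.card_fin,
        mul_inv, ← Finset.prod_inv_distrib]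
    rw [show (fun a : Fin n → ℕ+ => (∏ i, (2 * ((a i : ℕ) : ℝ)))⁻¹)
        = fun a => ((2:ℝ)^n)⁻¹ * ∏ i, ((a i : ℕ) : ℝ)⁻¹ from funext this] at h2
    exact (summable_mul_left_iff (by positivity)).1 h2
  -- restrict to the diagonal-like injection
  have i0 : Fin n := ⟨0, hn⟩
  set j : ℕ+ → (Fin n → ℕ+) := fun m i => if i = i0 then m else 1 with hj
  have hjinj : Function.Injective j := by
    intro x y hxy
    have := congrFun hxy i0
    simpa [hj] using this
  have h4 : Summable fun m : ℕ+ => ((m : ℕ) : ℝ)⁻¹ := by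
    have := h3.comp_injective hjinj
    refine this.congr fun m => ?_
    simp only [Function.comp, hj]
    rw [Finset.prod_eq_single i0 (fun i _ hi => by simp [hi]) (by simp)]
    simp
  -- contradiction with harmonic series
  have h5 : Summable fun m : ℕ => ((m : ℕ) : ℝ)⁻¹ := by
    rw [← Function.Injective.summable_iff PNat.coe_injective (f := fun m : ℕ => ((m:ℕ):ℝ)⁻¹)]
    · exact h4
    · intro x hx
      have : x = 0 := by
        by_contra hx0
        exact hx ⟨⟨x, Nat.pos_of_ne_zero hx0⟩, rfl⟩
      simp [this]
  exact Real.not_summable_one_div_natCast (by simpa [one_div] using h5)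

end main

theorem continuant_series_continuous_and_blowup (n : ℕ) (hn : 1 ≤ n) :
    ContinuousOn (fun s : ℝ => ∑' a : Fin n → ℕ+,
        ((K (List.ofFn fun i => (a i : ℕ)) : ℝ)) ^ (-(2 * s))) (Set.Ioi (1/2)) ∧
    Filter.Tendsto (fun s : ℝ => ∑' a : Fin n → ℕ+,
        ((K (List.ofFn fun i => (a i : ℕ)) : ℝ)) ^ (-(2 * s)))
      (nhdsWithin (1/2) (Set.Ioi (1/2))) Filter.atTop := by
  set F : ℝ → ℝ := fun s => ∑' a : Fin n → ℕ+, Pfun n a ^ (-(2 * s)) with hF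
  have hFeq : (fun s : ℝ => ∑' a : Fin n → ℕ+,
      ((K (List.ofFn fun i => (a i : ℕ)) : ℝ)) ^ (-(2 * s))) = F := rfl
  rw [hFeq]
  constructor
  · -- continuity
    intro s hs
    rw [Set.mem_Ioi] at hs
    apply ContinuousAt.continuousWithinAt
    set s0 : ℝ := (1/2 + s) / 2 with hs0def
    have hs01 : 1/2 < s0 := by rw [hs0def]; linarith
    have hs0s : s0 < s := by rw [hs0def]; linarith
    set G : ℝ → ℝ := fun x => ∑' a : Fin n → ℕ+, Pfun n a ^ (-(2 * max x s0)) with hG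
    have hGcont : Continuous G := by
      apply continuous_tsum (u := fun a => Pfun n a ^ (-(2 * s0)))
      · intro a
        apply Continuous.rpow continuous_const
        · exact (continuous_const.mul (continuous_id.max continuous_const)).neg
        · intro x
          left
          have := one_le_Pfun n a
          exact ne_of_gt (lt_of_lt_of_le one_pos this)
      · exact summable_Pfun n (by linarith : (1:ℝ) < 2 * s0)
      · intro a x
        rw [Real.norm_eq_abs, abs_of_nonneg (Real.rpow_nonneg
            (le_trans zero_le_one (one_le_Pfun n a)) _)]
        apply Real.rpow_le_rpow_of_exponent_le (one_le_Pfun n a)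
        have : s0 ≤ max x s0 := le_max_right _ _
        linarith
    have heq : ∀ᶠ x in nhds s, F x = G x := by
      filter_upwards [Ioi_mem_nhds hs0s] with x hx
      rw [hG, hF]
      simp only
      rw [max_eq_left (le_of_lt hx)]
    exact hGcont.continuousAt.congr (Filter.EventuallyEq.symm heq)
  · -- blowup
    rw [Filter.tendsto_atTop]
    intro M
    obtain ⟨u, hu⟩ : ∃ u : Finset (Fin n → ℕ+), M + 1 ≤ ∑ a ∈ u, (Pfun n a)⁻¹ := by
      by_contra h
      push_neg at h
      exact not_summable_inv_Pfun n hn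
        (summable_of_sum_le (fun a => by
          have := one_le_Pfun n a; positivity) (fun v => (h v).le))
    set g : ℝ → ℝ := fun s => ∑ a ∈ u, Pfun n a ^ (-(2 * s)) with hg
    have hgcont : Continuous g := by
      apply continuous_finset_sum
      intro a _
      apply Continuous.rpow continuous_const (continuous_const.mul continuous_id).neg
      intro x
      left
      exact ne_of_gt (lt_of_lt_of_le one_pos (one_le_Pfun n a))
    have hghalf : M + 1 ≤ g (1/2) := by
      rw [hg]
      simp only
      have : ∀ a : Fin n → ℕ+, Pfun n a ^ (-(2 * (1/2 : ℝ))) = (Pfun n a)⁻¹ := by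
        intro a
        norm_num
        exact Real.rpow_neg_one _
      rw [Finset.sum_congr rfl (fun a _ => this a)]
      exact hu
    have hev : ∀ᶠ x in nhds (1/2 : ℝ), M < g x :=
      hgcont.continuousAt.eventually_mem (Ioi_mem_nhds (lt_of_lt_of_le (by linarith) hghalf))
    filter_upwards [nhdsWithin_le_nhds hev, self_mem_nhdsWithin] with x hx hx2
    rw [Set.mem_Ioi] at hx2
    have hsum : Summable fun a : Fin n → ℕ+ => Pfun n a ^ (-(2 * x)) :=
      summable_Pfun n (by linarith)
    have : g x ≤ F x := Summable.sum_le_tsum u (fun a _ => Real.rpow_nonneg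
      (le_trans zero_le_one (one_le_Pfun n a)) _) hsum
    linarith [hx]
end

section
/- Let b, b' be distinct even integers in [B^{nt}, 2B^{nt}] with B > 1, t > 0, and let (a_1,…,a_n) be any n-tuple of positive integers. Then there is an integer b'' strictly between b and b', and the cylinder I_{n+1}(a_1,…,a_n,b'') has length at least (1/32)·|I_{n+1}(a_1,…,a_n,b)|; consequently, the distance between the cylinders I_{n+1}(a_1,…,a_n,b) and I_{n+1}(a_1,…,a_n,b') is at least |I_{n+1}(a_1,…,a_n,b)|/32. -/
def Kd (l : List ℕ) : ℕ := if l = [] then 0 else K l.dropLast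

noncomputable def hmap : List ℕ → ℝ → ℝ
  | [] => fun y => y
  | a :: l => fun y => 1 / (a + hmap l y)

theorem K_pos_s19 : ∀ (l : List ℕ), (∀ a ∈ l, 0 < a) → 0 < K l
  | [], _ => by simp [K]
  | [a], h => by simpa [K] using h a (by simp)
  | a :: b :: m, h => by
      have hb : 0 < K (b :: m) := K_pos_s19 (b :: m) (fun x hx => h x (by simp [hx]))
      have ha : 0 < a := h a (by simp)
      have : 0 < a * K (b :: m) := Nat.mul_pos ha hb
      simp only [K]; omega

lemma Kd_nil : Kd [] = 0 := by simp [Kd]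

lemma Kd_cons (a : ℕ) (l : List ℕ) : Kd (a :: l) = K ((a :: l).dropLast) := by simp [Kd]

lemma Kd_cons_cons (a b : ℕ) (m : List ℕ) : Kd (a :: b :: m) = a * Kd (b :: m) + Kd m := by
  cases m with
  | nil => simp [Kd, K]
  | cons x xs => simp [Kd, K, List.dropLast]

theorem K_append : ∀ (l : List ℕ) (c : ℕ), K (l ++ [c]) = c * K l + Kd l
  | [], c => by simp [K, Kd]
  | [a], c => by simp [K, Kd]; ring
  | a :: b :: m, c => by
      have h1 := K_append (b :: m) c
      have h2 := K_append m c
      have hcc := Kd_cons_cons a b m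
      simp only [List.cons_append] at *
      simp only [K] at *
      rw [h1, h2, hcc]; ring

lemma Kd_le (l : List ℕ) (hl : ∀ a ∈ l, 0 < a) : Kd l ≤ K l := by
  rcases List.eq_nil_or_concat l with rfl | ⟨init, c, rfl⟩
  · simp [Kd, K]
  · have hc : 0 < c := hl c (by simp)
    have hKd : Kd (init ++ [c]) = K init := by
      have : init ++ [c] ≠ [] := by simp
      simp [Kd, this]
    rw [List.concat_eq_append, hKd, K_append]
    have : K init ≤ c * K init := Nat.le_mul_of_pos_left _ hc
    omega

theorem hmap_main : ∀ (l : List ℕ), (∀ a ∈ l, 0 < a) →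
    ∃ (p p' : ℕ) (ε : ℤ), (ε = 1 ∨ ε = -1) ∧
      (∀ a : ℕ, K (a :: l) = a * K l + p) ∧
      (∀ a : ℕ, Kd (a :: l) = a * Kd l + p') ∧
      ((p' : ℤ) * K l - p * Kd l = ε) ∧
      (∀ y : ℝ, 0 ≤ y → hmap l y = (p + p' * y) / (K l + Kd l * y))
  | [], _ => by
      refine ⟨0, 1, 1, Or.inl rfl, ?_, ?_, by simp [K, Kd], ?_⟩
      · intro a; simp [K, Kd]
      · intro a; simp [K, Kd]
      · intro y hy; simp [hmap, K, Kd]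
  | a :: l, h => by
      have hl : ∀ x ∈ l, 0 < x := fun x hx => h x (by simp [hx])
      have ha : 0 < a := h a (by simp)
      obtain ⟨p, p', ε, hε, hKc, hKdc, hdet, hform⟩ := hmap_main l hl
      have hKl : 0 < K l := K_pos_s19 l hl
      have hKal : 0 < K (a :: l) := K_pos_s19 _ h
      refine ⟨K l, Kd l, -ε, by rcases hε with h|h <;> simp [h], ?_, ?_, ?_, ?_⟩
      · intro b; rcases l with _ | ⟨x, xs⟩
        · simp [K]
        · simp only [K]
      · intro b; exact Kd_cons_cons b a l
      · have h1 := hKc a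
        have h2 := hKdc a
        have : ((Kd l : ℤ)) * K (a :: l) - (K l) * Kd (a :: l)
            = -((p' : ℤ) * K l - p * Kd l) := by
          rw [h1, h2]; push_cast; ring
        rw [this, hdet]
      · intro y hy
        have hD : (0:ℝ) < K l + Kd l * y := by
          have : (1:ℝ) ≤ K l := by exact_mod_cast hKl
          positivity
        have hN : (0:ℝ) < K (a :: l) + Kd (a :: l) * y := by
          have : (1:ℝ) ≤ K (a :: l) := by exact_mod_cast hKal
          positivity
        have hnum : (K (a :: l) : ℝ) + Kd (a :: l) * y
            = a * ((K l : ℝ) + Kd l * y) + (p + p' * y) := by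
          have h1 := hKc a
          have h2 := hKdc a
          rw [h1, h2]; push_cast; ring
        have hval : hmap (a :: l) y = 1 / (a + hmap l y) := rfl
        rw [hval, hform y hy]
        have e : (a:ℝ) + (↑p + ↑p' * y) / (↑(K l) + ↑(Kd l) * y)
            = (↑(K (a :: l)) + ↑(Kd (a :: l)) * y) / (↑(K l) + ↑(Kd l) * y) := by
          rw [hnum]; field_simp
        rw [e, one_div_div]

lemma hmap_sub (l : List ℕ) (hl : ∀ a ∈ l, 0 < a) :
    ∃ ε : ℝ, |ε| = 1 ∧ ∀ y y' : ℝ, 0 ≤ y → 0 ≤ y' →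
      hmap l y - hmap l y' =
        ε * (y - y') / ((K l + Kd l * y) * (K l + Kd l * y')) := by
  obtain ⟨p, p', ε, hε, _, _, hdet, hform⟩ := hmap_main l hl
  have hKl : (1:ℝ) ≤ K l := by exact_mod_cast K_pos_s19 l hl
  refine ⟨(ε : ℝ), by rcases hε with h|h <;> simp [h], ?_⟩
  intro y y' hy hy'
  have hD : (0:ℝ) < K l + Kd l * y := by positivity
  have hD' : (0:ℝ) < K l + Kd l * y' := by positivity
  rw [hform y hy, hform y' hy']
  rw [div_sub_div _ _ hD.ne' hD'.ne', div_eq_div_iff (by positivity) (by positivity)]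
  have hdetR : (p' : ℝ) * K l - p * Kd l = (ε : ℝ) := by exact_mod_cast hdet
  linear_combination ((K l : ℝ) + Kd l * y) * ((K l : ℝ) + Kd l * y') * (y - y') * hdetR

lemma hmap_append : ∀ (l₁ l₂ : List ℕ) (y : ℝ), hmap (l₁ ++ l₂) y = hmap l₁ (hmap l₂ y)
  | [], l₂, y => rfl
  | a :: m, l₂, y => by
      simp only [List.cons_append, hmap, List.append_eq, hmap_append m l₂ y]

lemma cylinder_subset_Ico (l : List ℕ) : cylinder l ⊆ Set.Ico (0:ℝ) 1 :=
  fun _ hx => hx.1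

theorem hmap_mem_cylinder : ∀ (l : List ℕ), (∀ a ∈ l, 0 < a) → ∀ y : ℝ, y ∈ Set.Ioo (0:ℝ) 1 →
    hmap l y ∈ Set.Ioo (0:ℝ) 1 ∧ hmap l y ∈ cylinder l
  | [], _, y, hy => by
      refine ⟨hy, ⟨⟨hy.1.le, hy.2⟩, ?_⟩⟩
      intro i hi; simp at hi
  | a :: l, h, y, hy => by
      have hl : ∀ x ∈ l, 0 < x := fun x hx => h x (by simp [hx])
      have ha : 0 < a := h a (by simp)
      have ha1 : (1:ℝ) ≤ a := by exact_mod_cast ha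
      obtain ⟨hzI, hzC⟩ := hmap_mem_cylinder l hl y hy
      set z := hmap l y with hzdef
      have hz0 : 0 < z := hzI.1
      have hz1 : z < 1 := hzI.2
      have hden : (1:ℝ) < a + z := by linarith
      have hdpos : (0:ℝ) < a + z := by linarith
      have hx : hmap (a :: l) y = 1 / (a + z) := rfl
      set x := 1 / ((a:ℝ) + z) with hxdef
      have hx0 : 0 < x := by positivity
      have hx1 : x < 1 := by
        rw [hxdef]; rw [div_lt_one hdpos]; linarith
      have hinv : 1 / x = (a:ℝ) + z := by
        rw [hxdef, one_div_one_div]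
      have hfloorNat : ⌊(1:ℝ) / x⌋₊ = a := by
        rw [hinv]
        have : (a:ℝ) + z = z + (a:ℕ) := by push_cast; ring
        rw [this, Nat.floor_add_natCast hz0.le, Nat.floor_eq_zero.mpr hz1]
        simp
      have hfloorInt : ⌊(1:ℝ) / x⌋ = (a:ℤ) := by
        rw [hinv]
        have : (a:ℝ) + z = z + ((a:ℤ):ℝ) := by push_cast; ring
        rw [this, Int.floor_add_intCast, Int.floor_eq_zero_iff.mpr ⟨hz0.le, hz1⟩]
        simp
      have hgauss : gaussMap x = z := by
        rw [gaussMap, if_neg hx0.ne', hfloorInt, hinv]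
        push_cast; ring
      rw [hx]
      refine ⟨⟨hx0, hx1⟩, ⟨⟨hx0.le, hx1⟩, ?_⟩⟩
      intro i hi
      match i with
      | 0 => simpa [cfA] using hfloorNat
      | Nat.succ j =>
          have hj : j < l.length := by simpa using hi
          have := hzC.2 j hj
          simp only [cfA] at this ⊢
          rw [Function.iterate_succ_apply, hgauss]
          simpa using this

theorem cylinder_param : ∀ (l : List ℕ), (∀ a ∈ l, 0 < a) → ∀ x ∈ cylinder l,
    ∃ y ∈ Set.Ico (0:ℝ) 1, x = hmap l y
  | [], _, x, hx => ⟨x, hx.1, rfl⟩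
  | a :: l, h, x, hx => by
      have hl : ∀ u ∈ l, 0 < u := fun u hu => h u (by simp [hu])
      have ha : 0 < a := h a (by simp)
      obtain ⟨hxI, hxC⟩ := hx
      have hfa : ⌊(1:ℝ)/x⌋₊ = a := by
        have := hxC 0 (by simp)
        simpa [cfA] using this
      have hxne : x ≠ 0 := by
        intro h0
        rw [h0] at hfa
        simp at hfa
        omega
      have hx0 : 0 < x := lt_of_le_of_ne hxI.1 (Ne.symm hxne)
      have hix : (0:ℝ) < 1/x := by positivity
      have hfl : ((a:ℝ)) ≤ 1/x ∧ 1/x < a + 1 := by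
        constructor
        · exact_mod_cast (Nat.floor_eq_iff hix.le).mp hfa |>.1
        · exact_mod_cast (Nat.floor_eq_iff hix.le).mp hfa |>.2
      have hfloorInt : ⌊(1:ℝ)/x⌋ = (a:ℤ) := by
        rw [Int.floor_eq_iff]
        constructor
        · exact_mod_cast hfl.1
        · push_cast; exact hfl.2
      set z := gaussMap x with hzdef
      have hz : z = 1/x - a := by
        rw [hzdef, gaussMap, if_neg hxne, hfloorInt]
        push_cast; ring
      have hz0 : 0 ≤ z := by rw [hz]; linarith [hfl.1]
      have hz1 : z < 1 := by rw [hz]; linarith [hfl.2]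
      have hzC : z ∈ cylinder l := by
        refine ⟨⟨hz0, hz1⟩, ?_⟩
        intro i hi
        have := hxC (i+1) (by simpa using Nat.succ_lt_succ hi)
        simp only [cfA] at this ⊢
        rw [Function.iterate_succ_apply] at this
        simpa using this
      obtain ⟨y, hy, hzy⟩ := cylinder_param l hl z hzC
      refine ⟨y, hy, ?_⟩
      have hxinv : 1/x = (a:ℝ) + z := by rw [hz]; ring
      have : hmap (a :: l) y = 1 / ((a:ℝ) + z) := by
        simp only [hmap, ← hzy]
      rw [this, ← hxinv, one_div_one_div]

lemma cylinder_bounded (l : List ℕ) : Bornology.IsBounded (cylinder l) :=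
  (Metric.isBounded_Icc (0:ℝ) 1).subset
    ((cylinder_subset_Ico l).trans Set.Ico_subset_Icc_self)

lemma diam_cylinder_le (l : List ℕ) (hl : ∀ a ∈ l, 0 < a) :
    Metric.diam (cylinder l) ≤ 1 / (K l : ℝ)^2 := by
  have hKl : (1:ℝ) ≤ K l := by exact_mod_cast K_pos_s19 l hl
  have hKd0 : (0:ℝ) ≤ Kd l := by positivity
  apply Metric.diam_le_of_forall_dist_le (by positivity)
  intro x hx x' hx'
  obtain ⟨y, hy, rfl⟩ := cylinder_param l hl x hx
  obtain ⟨y', hy', rfl⟩ := cylinder_param l hl x' hx'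
  obtain ⟨ε, hε, hsub⟩ := hmap_sub l hl
  have hD : (0:ℝ) < K l + Kd l * y := by nlinarith [hy.1]
  have hD' : (0:ℝ) < K l + Kd l * y' := by nlinarith [hy'.1]
  rw [Real.dist_eq, hsub y y' hy.1 hy'.1]
  have habs : |ε * (y - y') / ((K l + Kd l * y) * (K l + Kd l * y'))|
      = |y - y'| / ((K l + Kd l * y) * (K l + Kd l * y')) := by
    rw [abs_div, abs_of_pos (mul_pos hD hD'), abs_mul, hε, one_mul]
  rw [habs]
  have h1 : |y - y'| ≤ 1 := by
    rw [abs_le]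
    constructor <;> nlinarith [hy.1, hy.2, hy'.1, hy'.2]
  have h2 : (K l : ℝ)^2 ≤ (K l + Kd l * y) * (K l + Kd l * y') := by
    nlinarith [mul_nonneg hKd0 hy.1, mul_nonneg hKd0 hy'.1]
  exact div_le_div₀ (by norm_num) h1 (by positivity) h2

lemma sep_aux (l : List ℕ) (hl : ∀ a ∈ l, 0 < a) (u v w : ℕ) (hu : 0 < u)
    (huv : u < v) (hvw : v < w)
    (x x' : ℝ) (hx : x ∈ cylinder (l ++ [w])) (hx' : x' ∈ cylinder (l ++ [u])) :
    dist (hmap (l ++ [v]) (1/4)) (hmap (l ++ [v]) (3/4)) ≤ |x - x'| := by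
  have hlw : ∀ a ∈ l ++ [w], 0 < a := by
    intro a ha; rcases List.mem_append.mp ha with h | h
    · exact hl a h
    · simp at h; omega
  have hlu : ∀ a ∈ l ++ [u], 0 < a := by
    intro a ha; rcases List.mem_append.mp ha with h | h
    · exact hl a h
    · simp at h; omega
  obtain ⟨y, hy, rfl⟩ := cylinder_param (l ++ [w]) hlw x hx
  obtain ⟨y', hy', rfl⟩ := cylinder_param (l ++ [u]) hlu x' hx'
  have hu1 : (1:ℝ) ≤ u := by exact_mod_cast hu
  have huv1 : (u:ℝ) + 1 ≤ v := by exact_mod_cast huv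
  have hvw1 : (v:ℝ) + 1 ≤ w := by exact_mod_cast hvw
  set s : ℝ := 1/((w:ℝ) + y) with hs
  set s' : ℝ := 1/((u:ℝ) + y') with hs'
  set t1 : ℝ := 1/((v:ℝ) + 1/4) with ht1
  set t2 : ℝ := 1/((v:ℝ) + 3/4) with ht2
  have hwy : (0:ℝ) < w + y := by linarith [hy.1]
  have huy : (0:ℝ) < u + y' := by linarith [hy'.1]
  have hv14 : (0:ℝ) < v + 1/4 := by linarith
  have hv34 : (0:ℝ) < v + 3/4 := by linarith
  have hxw : hmap (l ++ [w]) y = hmap l s := by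
    rw [hmap_append]; congr 1 <;> simp [hmap]
  have hxu : hmap (l ++ [u]) y' = hmap l s' := by
    rw [hmap_append]; congr 1 <;> simp [hmap]
  have hp1 : hmap (l ++ [v]) (1/4) = hmap l t1 := by
    rw [hmap_append]; congr 1 <;> simp [hmap]
  have hp2 : hmap (l ++ [v]) (3/4) = hmap l t2 := by
    rw [hmap_append]; congr 1 <;> simp [hmap]
  -- ordering: 0 < s < t2 < t1 < s'
  have h0s : 0 < s := by rw [hs]; positivity
  have hst2 : s < t2 := by
    rw [hs, ht2]
    exact one_div_lt_one_div_of_lt hv34 (by linarith [hy.1])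
  have ht2t1 : t2 < t1 := by
    rw [ht1, ht2]
    exact one_div_lt_one_div_of_lt hv14 (by linarith)
  have ht1s' : t1 < s' := by
    rw [hs', ht1]
    exact one_div_lt_one_div_of_lt huy (by linarith [hy'.2])
  obtain ⟨ε, hε, hsub⟩ := hmap_sub l hl
  have hKl : (1:ℝ) ≤ K l := by exact_mod_cast K_pos_s19 l hl
  have hKd0 : (0:ℝ) ≤ Kd l := by positivity
  have h0s' : 0 < s' := by rw [hs']; positivity
  have h0t1 : 0 < t1 := by rw [ht1]; positivity
  have h0t2 : 0 < t2 := by rw [ht2]; positivity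
  have hDs : (0:ℝ) < K l + Kd l * s := by
    have := mul_nonneg hKd0 h0s.le; linarith
  have hDs' : (0:ℝ) < K l + Kd l * s' := by
    have := mul_nonneg hKd0 h0s'.le; linarith
  have hDt1 : (0:ℝ) < K l + Kd l * t1 := by
    have := mul_nonneg hKd0 h0t1.le; linarith
  have hDt2 : (0:ℝ) < K l + Kd l * t2 := by
    have := mul_nonneg hKd0 h0t2.le; linarith
  set A : ℝ := (s' - t1)/((K l + Kd l * s') * (K l + Kd l * t1)) with hA
  set Bm : ℝ := (t1 - t2)/((K l + Kd l * t1) * (K l + Kd l * t2)) with hBm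
  set C : ℝ := (t2 - s)/((K l + Kd l * t2) * (K l + Kd l * s)) with hC
  have hA0 : 0 ≤ A := by rw [hA]; apply div_nonneg (by linarith) (by positivity)
  have hBm0 : 0 ≤ Bm := by rw [hBm]; apply div_nonneg (by linarith) (by positivity)
  have hC0 : 0 ≤ C := by rw [hC]; apply div_nonneg (by linarith) (by positivity)
  have hsplit : hmap l s' - hmap l s = ε * (A + Bm + C) := by
    have e1 := hsub s' t1 (by linarith) (by linarith)
    have e2 := hsub t1 t2 (by linarith) (by linarith)
    have e3 := hsub t2 s (by linarith) h0s.le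
    have hsum : hmap l s' - hmap l s
        = (hmap l s' - hmap l t1) + (hmap l t1 - hmap l t2) + (hmap l t2 - hmap l s) := by
      ring
    rw [hsum, e1, e2, e3, hA, hBm, hC]; ring
  have hmid : hmap l t1 - hmap l t2 = ε * Bm := by
    rw [hsub t1 t2 (by linarith) (by linarith), hBm]; ring
  have habs1 : |hmap (l ++ [w]) y - hmap (l ++ [u]) y'| = A + Bm + C := by
    rw [hxw, hxu, abs_sub_comm, hsplit, abs_mul, hε, one_mul,
      abs_of_nonneg (by linarith)]
  rw [Real.dist_eq, hp1, hp2, hmid, habs1, abs_mul, hε, one_mul, abs_of_nonneg hBm0]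
  linarith

lemma dist_quarters (m : List ℕ) (hm : ∀ a ∈ m, 0 < a) :
    1 / (8 * (K m : ℝ)^2) ≤ dist (hmap m (1/4)) (hmap m (3/4)) := by
  obtain ⟨ε, hε, hsub⟩ := hmap_sub m hm
  have hKm : (1:ℝ) ≤ K m := by exact_mod_cast K_pos_s19 m hm
  have hKd : (Kd m : ℝ) ≤ K m := by exact_mod_cast Kd_le m hm
  have hKd0 : (0:ℝ) ≤ Kd m := by positivity
  have hD1 : (0:ℝ) < K m + Kd m * (1/4) := by nlinarith
  have hD2 : (0:ℝ) < K m + Kd m * (3/4) := by nlinarith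
  rw [Real.dist_eq, hsub (1/4) (3/4) (by norm_num) (by norm_num)]
  have : |ε * (1/4 - 3/4) / ((K m + Kd m * (1/4)) * (K m + Kd m * (3/4)))|
      = (1/2) / ((K m + Kd m * (1/4)) * (K m + Kd m * (3/4))) := by
    rw [abs_div, abs_of_pos (mul_pos hD1 hD2), abs_mul, hε, one_mul]
    rw [show |(1:ℝ)/4 - 3/4| = 1/2 by rw [abs_sub_comm]; rw [abs_of_nonneg] <;> norm_num]
  rw [this]
  have hub : (K m + Kd m * (1/4)) * (K m + Kd m * (3/4)) ≤ 4 * (K m : ℝ)^2 := by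
    nlinarith
  rw [show (1:ℝ)/(8 * (K m:ℝ)^2) = ((1:ℝ)/2)/(4*(K m:ℝ)^2) by ring]
  exact div_le_div_of_nonneg_left (by norm_num) (mul_pos hD1 hD2) hub

theorem cylinder_separation (n : ℕ) (t B : ℝ) (ht : 0 < t) (hB : 1 < B)
    (l : List ℕ) (hlen : l.length = n) (hl : ∀ a ∈ l, 0 < a)
    (b b' : ℕ) (hne : b ≠ b') (heb : Even b) (heb' : Even b')
    (hb1 : B ^ ((n:ℝ) * t) ≤ (b:ℝ)) (hb2 : (b:ℝ) ≤ 2 * B ^ ((n:ℝ) * t))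
    (hb1' : B ^ ((n:ℝ) * t) ≤ (b':ℝ)) (hb2' : (b':ℝ) ≤ 2 * B ^ ((n:ℝ) * t)) :
    ∃ b'' : ℕ, min b b' < b'' ∧ b'' < max b b' ∧
      Metric.diam (cylinder (l ++ [b])) / 32 ≤ Metric.diam (cylinder (l ++ [b''])) ∧
      ∀ x ∈ cylinder (l ++ [b]), ∀ y ∈ cylinder (l ++ [b']),
        Metric.diam (cylinder (l ++ [b])) / 32 ≤ |x - y| := by
  set X : ℝ := B ^ ((n:ℝ) * t) with hX
  have hX1 : (1:ℝ) ≤ X := by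
    rw [hX]
    apply Real.one_le_rpow hB.le (by positivity)
  have hbn : 0 < b := by
    by_contra h
    push_neg at h
    interval_cases b
    simp at hb1; linarith
  have hbn' : 0 < b' := by
    by_contra h
    push_neg at h
    interval_cases b'
    simp at hb1'; linarith
  obtain ⟨r, hr⟩ := heb
  obtain ⟨r', hr'⟩ := heb'
  have hmM : min b b' + 2 ≤ max b b' := by omega
  set v := min b b' + 1 with hv
  have hvb : 0 < v := by omega
  -- positivity of lists
  have hlb : ∀ a ∈ l ++ [b], 0 < a := by
    intro a ha; rcases List.mem_append.mp ha with h | h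
    · exact hl a h
    · simp at h; omega
  have hlv : ∀ a ∈ l ++ [v], 0 < a := by
    intro a ha; rcases List.mem_append.mp ha with h | h
    · exact hl a h
    · simp at h; omega
  -- continuant facts
  have hKl1 : (1:ℝ) ≤ K l := by exact_mod_cast K_pos_s19 l hl
  have hKdl : (Kd l : ℝ) ≤ K l := by exact_mod_cast Kd_le l hl
  have hKdl0 : (0:ℝ) ≤ Kd l := by positivity
  have hQb : (K (l ++ [b]) : ℝ) = b * K l + Kd l := by
    rw [K_append]; push_cast; ring
  have hQv : (K (l ++ [v]) : ℝ) = v * K l + Kd l := by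
    rw [K_append]; push_cast; ring
  have hQb_ge : X * K l ≤ (K (l ++ [b]) : ℝ) := by
    rw [hQb]
    have : X * K l ≤ b * K l := by
      apply mul_le_mul_of_nonneg_right hb1 (by linarith)
    linarith
  have hXK : (0:ℝ) < X * K l := by nlinarith
  -- diameter upper bound for cylinder (l ++ [b])
  have hdiam_b : Metric.diam (cylinder (l ++ [b])) ≤ 1 / (X * K l)^2 := by
    refine (diam_cylinder_le (l ++ [b]) hlb).trans ?_
    apply div_le_div_of_nonneg_left (by norm_num) (by positivity)
    have h0 : (0:ℝ) ≤ K (l ++ [b]) := by positivity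
    nlinarith
  -- upper bound for K (l ++ [v])
  have hvM : (v:ℝ) + 1 ≤ 2 * X := by
    have hv' : v + 1 ≤ max b b' := hmM
    have : ((max b b' : ℕ) : ℝ) ≤ 2 * X := by
      rcases max_cases b b' with ⟨h1, _⟩ | ⟨h1, _⟩ <;> rw [h1]
      · exact hb2
      · exact hb2'
    have h2 : ((v:ℝ) + 1) ≤ ((max b b' : ℕ) : ℝ) := by exact_mod_cast hv'
    linarith
  have hQv_le : (K (l ++ [v]) : ℝ) ≤ 2 * X * K l := by
    rw [hQv]
    have h1 : (v:ℝ) * K l + Kd l ≤ (v:ℝ) * K l + K l := by linarith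
    have h2 : (v:ℝ) * K l + K l = ((v:ℝ) + 1) * K l := by ring
    have h3 : ((v:ℝ) + 1) * K l ≤ 2 * X * K l := by
      apply mul_le_mul_of_nonneg_right hvM (by linarith)
    linarith
  have hQv_pos : (0:ℝ) < K (l ++ [v]) := by
    exact_mod_cast K_pos_s19 (l ++ [v]) hlv
  -- key numeric inequality
  have hkey : 1 / (X * K l)^2 / 32 ≤ 1 / (8 * (K (l ++ [v]) : ℝ)^2) := by
    rw [div_div]
    apply div_le_div_of_nonneg_left (by norm_num) (by positivity)
    nlinarith
  -- the two distinguished points of cylinder (l ++ [v])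
  have hq1 := hmap_mem_cylinder (l ++ [v]) hlv (1/4) (by norm_num)
  have hq2 := hmap_mem_cylinder (l ++ [v]) hlv (3/4) (by norm_num)
  have hdistq := dist_quarters (l ++ [v]) hlv
  have hdge : Metric.diam (cylinder (l ++ [b])) / 32 ≤ 1 / (8 * (K (l ++ [v]) : ℝ)^2) := by
    refine le_trans ?_ hkey
    apply div_le_div_of_nonneg_right hdiam_b (by norm_num)
  refine ⟨v, by omega, by omega, ?_, ?_⟩
  · refine hdge.trans (hdistq.trans ?_)
    exact Metric.dist_le_diam_of_mem (cylinder_bounded _) hq1.2 hq2.2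
  · intro x hx y hy
    refine hdge.trans (hdistq.trans ?_)
    rcases Nat.lt_or_ge b b' with hlt | hge
    · have hmin : min b b' = b := Nat.min_eq_left hlt.le
      have h := sep_aux l hl b v b' hbn (by omega) (by omega) y x hy hx
      rwa [abs_sub_comm] at h
    · have hlt' : b' < b := by omega
      have hmin : min b b' = b' := Nat.min_eq_right hlt'.le
      exact sep_aux l hl b' v b hbn' (by omega) (by omega) x y hx hy
end
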